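/- Let E be a full heap over A, where P is finite and A is of affine type. Then for every w in W and all proper ideals F, F' of E, chi(w · F, w · F') = w(chi(F, F')), where w acts on B via the S_p-action and on Z^P via the reflection representation. -/

import Mathlib

/-- Two vertices of the Dynkin diagram are adjacent if they are distinct
and the corresponding entry of the generalized Cartan matrix is nonzero. -/
def Adj {P : Type*} (A : P → P → ℤ) (p q : P) : Prop := p ≠ q ∧ A p q ≠ 0

/-- A generalized Cartan matrix with all entries in {2, 0, -1, -2}. -/
def IsGCM {P : Type*} (A : P → P → ℤ) : Prop :=
  (∀ p, A p p = 2) ∧ (∀ p q, p ≠ q → A p q ≤ 0) ∧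
  (∀ p q, (A p q = 0 ↔ A q p = 0)) ∧
  (∀ p q, A p q = 2 ∨ A p q = 0 ∨ A p q = -1 ∨ A p q = -2)

/-- An ideal (downward-closed subset) of a partially ordered set. -/
def IsIdeal {E : Type*} [PartialOrder E] (F : Set E) : Prop :=
  ∀ ⦃x : E⦄, x ∈ F → ∀ ⦃y : E⦄, y ≤ x → y ∈ F

/-- A proper ideal: an ideal meeting each fibre `eps ⁻¹ {p}` in a nonempty
proper subset. -/
def IsProperIdeal {P E : Type*} [PartialOrder E] (eps : E → P) (F : Set E) : Prop :=
  IsIdeal F ∧ ∀ p : P, (∃ a, eps a = p ∧ a ∈ F) ∧ (∃ a, eps a = p ∧ a ∉ F)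

/-- A full heap over the generalized Cartan matrix `A` with labelling map `eps`.
Local finiteness is expressed by the `LocallyFiniteOrder` instance. -/
structure IsFullHeap {P E : Type*} [PartialOrder E] [LocallyFiniteOrder E]
    (A : P → P → ℤ) (eps : E → P) : Prop where
  /-- elements with equal or adjacent labels are comparable -/
  comparable : ∀ a b : E, (eps a = eps b ∨ Adj A (eps a) (eps b)) → a ≤ b ∨ b ≤ a
  /-- the order is the reflexive-transitive closure of its restriction to
  pairs with equal or adjacent labels -/
  le_generated : ∀ a b : E, a ≤ b ↔
    Relation.ReflTransGen (fun x y : E => x ≤ y ∧ (eps x = eps y ∨ Adj A (eps x) (eps y))) a b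
  /-- each fibre is unbounded above in E -/
  unbounded_above : ∀ (p : P) (a : E), ∃ b, eps b = p ∧ ¬ b ≤ a
  /-- each fibre is unbounded below in E -/
  unbounded_below : ∀ (p : P) (a : E), ∃ b, eps b = p ∧ ¬ a ≤ b
  /-- covering elements with adjacent labels exist -/
  covers : ∀ p p' : P, Adj A p p' → ∀ a : E, eps a = p →
    ∃ b, eps b = p' ∧ (a ⋖ b ∨ b ⋖ a)
  /-- the defining condition on open intervals between consecutive elements
  of a fibre -/
  interval : ∀ a b : E, a < b → eps a = eps b →
    (∀ c, a < c → c < b → eps c ≠ eps a) →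
    (∑ c ∈ Finset.Ioo a b, A (eps a) (eps c)) = -2

/-- The character of a pair of proper ideals:
`chi(F, F')(p) = |(F' \ F) ∩ eps⁻¹(p)| - |(F \ F') ∩ eps⁻¹(p)|`. -/
noncomputable def chiFn {P E : Type*} (eps : E → P) (F F' : Set E) : P → ℤ :=
  fun p => (((F' \ F) ∩ eps ⁻¹' {p}).ncard : ℤ) - (((F \ F') ∩ eps ⁻¹' {p}).ncard : ℤ)

open Classical in
/-- The operator `S_p` on ideals: remove the (unique) element of label `p`
that can be removed, else add the (unique) element of label `p` that can be
added, else do nothing. -/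
noncomputable def Sact {P E : Type*} [PartialOrder E] (eps : E → P) (p : P) (I : Set E) :
    Set E :=
  if h : ∃ a, a ∈ I ∧ eps a = p ∧ IsIdeal (I \ {a}) then I \ {h.choose}
  else if h' : ∃ a, a ∉ I ∧ eps a = p ∧ IsIdeal (I ∪ {a}) then I ∪ {h'.choose}
  else I

/-- The defining relations of the Weyl group of a (doubly laced)
generalized Cartan matrix. -/
def weylRels {P : Type*} (A : P → P → ℤ) : Set (FreeGroup P) :=
  {r | (∃ p, r = FreeGroup.of p ^ 2) ∨
       (∃ p q, A p q = 0 ∧ r = (FreeGroup.of p * FreeGroup.of q) ^ 2) ∨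
       (∃ p q, A p q * A q p = 1 ∧ r = (FreeGroup.of p * FreeGroup.of q) ^ 3) ∨
       (∃ p q, A p q * A q p = 2 ∧ r = (FreeGroup.of p * FreeGroup.of q) ^ 4)}

/-- The Weyl group of a generalized Cartan matrix, as a presented group. -/
abbrev WeylGroup {P : Type*} (A : P → P → ℤ) := PresentedGroup (weylRels A)

/-- The reflection `s_p` in the reflection representation on `ℤ^P`:
`s_p(v) = v - (∑ q, a_{pq} v_q) e_p`. -/
def reflAct {P : Type*} [Fintype P] [DecidableEq P] (A : P → P → ℤ) (p : P) (v : P → ℤ) :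
    P → ℤ :=
  fun r => if r = p then v p - ∑ q, A p q * v q else v r

/-- `A` is of affine type: indecomposable, and `A δ = 0` for some positive
integer vector `δ`. -/
def IsAffine {P : Type*} [Fintype P] (A : P → P → ℤ) : Prop :=
  (∀ p q : P, Relation.ReflTransGen (Adj A) p q) ∧
  ∃ δ : P → ℤ, (∀ p, 0 < δ p) ∧ ∀ p, (∑ q, A p q * δ q) = 0


-- ### Auxiliary development ###
section Counting
variable {E : Type*}

lemma ncard_diff_sub_ncard_diff [DecidableEq E] (D : Finset E) (U V : Set E)
    [DecidablePred (· ∈ U)] [DecidablePred (· ∈ V)]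
    (hUV : U \ V ⊆ ↑D) (hVU : V \ U ⊆ ↑D) :
    ((U \ V).ncard : ℤ) - ((V \ U).ncard : ℤ) =
      ((D.filter (· ∈ U)).card : ℤ) - ((D.filter (· ∈ V)).card : ℤ) := by
  classical
  have h1 : U \ V = ↑(D.filter (fun x => x ∈ U ∧ x ∉ V)) := by
    ext x
    simp only [Finset.coe_filter, Set.mem_setOf_eq, Set.mem_diff]
    exact ⟨fun h => ⟨hUV h, h⟩, fun h => h.2⟩
  have h2 : V \ U = ↑(D.filter (fun x => x ∈ V ∧ x ∉ U)) := by
    ext x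
    simp only [Finset.coe_filter, Set.mem_setOf_eq, Set.mem_diff]
    exact ⟨fun h => ⟨hVU h, h⟩, fun h => h.2⟩
  have e1 : (D.filter (· ∈ U)).card
      = ((D.filter (· ∈ U)).filter (· ∈ V)).card + ((D.filter (· ∈ U)).filter (· ∉ V)).card :=
    (Finset.card_filter_add_card_filter_not _).symm
  have e2 : (D.filter (· ∈ V)).card
      = ((D.filter (· ∈ V)).filter (· ∈ U)).card + ((D.filter (· ∈ V)).filter (· ∉ U)).card :=
    (Finset.card_filter_add_card_filter_not _).symm
  have e3 : (D.filter (· ∈ U)).filter (· ∈ V) = (D.filter (· ∈ V)).filter (· ∈ U) := by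
    rw [Finset.filter_filter, Finset.filter_filter]
    exact Finset.filter_congr (fun x _ => by tauto)
  rw [h1, h2, Set.ncard_coe_finset, Set.ncard_coe_finset]
  have e4 : D.filter (fun x => x ∈ U ∧ x ∉ V) = (D.filter (· ∈ U)).filter (· ∉ V) := by
    rw [Finset.filter_filter]
  have e5 : D.filter (fun x => x ∈ V ∧ x ∉ U) = (D.filter (· ∈ V)).filter (· ∉ U) := by
    rw [Finset.filter_filter]
  rw [e3] at e1
  rw [e4, e5]
  omega

lemma nu_add (X Y Z : Set E) (h1 : (Y \ X).Finite) (h2 : (X \ Y).Finite)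
    (h3 : (Z \ Y).Finite) (h4 : (Y \ Z).Finite) :
    ((Z \ X).ncard : ℤ) - ((X \ Z).ncard : ℤ) =
      (((Y \ X).ncard : ℤ) - ((X \ Y).ncard : ℤ))
        + (((Z \ Y).ncard : ℤ) - ((Y \ Z).ncard : ℤ)) := by
  classical
  set D := (h1.union (h2.union (h3.union h4))).toFinset with hDdef
  have hD : (D : Set E) = (Y \ X) ∪ ((X \ Y) ∪ ((Z \ Y) ∪ (Y \ Z))) := by
    simp [hDdef]
  have hYX : Y \ X ⊆ ↑D := by rw [hD]; intro x hx; exact Or.inl hx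
  have hXY : X \ Y ⊆ ↑D := by rw [hD]; intro x hx; exact Or.inr (Or.inl hx)
  have hZY : Z \ Y ⊆ ↑D := by rw [hD]; intro x hx; exact Or.inr (Or.inr (Or.inl hx))
  have hYZ : Y \ Z ⊆ ↑D := by rw [hD]; intro x hx; exact Or.inr (Or.inr (Or.inr hx))
  have hZX : Z \ X ⊆ ↑D := by
    rw [hD]; rintro x ⟨hxZ, hxX⟩
    by_cases hy : x ∈ Y
    · exact Or.inl ⟨hy, hxX⟩
    · exact Or.inr (Or.inr (Or.inl ⟨hxZ, hy⟩))
  have hXZ : X \ Z ⊆ ↑D := by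
    rw [hD]; rintro x ⟨hxX, hxZ⟩
    by_cases hy : x ∈ Y
    · exact Or.inr (Or.inr (Or.inr ⟨hy, hxZ⟩))
    · exact Or.inr (Or.inl ⟨hxX, hy⟩)
  rw [ncard_diff_sub_ncard_diff D Z X hZX hXZ,
    ncard_diff_sub_ncard_diff D Y X hYX hXY,
    ncard_diff_sub_ncard_diff D Z Y hZY hYZ]
  ring

end Counting

section ChiLemmas
variable {P E : Type*}

lemma diff_inter_fib (eps : E → P) (X Y : Set E) (r : P) :
    (Y \ X) ∩ eps ⁻¹' {r} = (Y ∩ eps ⁻¹' {r}) \ (X ∩ eps ⁻¹' {r}) := by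
  ext x
  simp only [Set.mem_inter_iff, Set.mem_diff, Set.mem_preimage, Set.mem_singleton_iff]
  tauto

lemma chiFn_apply_eq (eps : E → P) (X Y : Set E) (r : P) :
    chiFn eps X Y r =
      (((Y ∩ eps ⁻¹' {r}) \ (X ∩ eps ⁻¹' {r})).ncard : ℤ)
        - (((X ∩ eps ⁻¹' {r}) \ (Y ∩ eps ⁻¹' {r})).ncard : ℤ) := by
  unfold chiFn
  rw [diff_inter_fib, diff_inter_fib]

lemma chiFn_add (eps : E → P) (X Y Z : Set E)
    (h1 : ∀ r, ((Y \ X) ∩ eps ⁻¹' {r}).Finite)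
    (h2 : ∀ r, ((X \ Y) ∩ eps ⁻¹' {r}).Finite)
    (h3 : ∀ r, ((Z \ Y) ∩ eps ⁻¹' {r}).Finite)
    (h4 : ∀ r, ((Y \ Z) ∩ eps ⁻¹' {r}).Finite) :
    chiFn eps X Z = chiFn eps X Y + chiFn eps Y Z := by
  funext r
  have e1 := h1 r; have e2 := h2 r; have e3 := h3 r; have e4 := h4 r
  rw [diff_inter_fib] at e1 e2 e3 e4
  have := nu_add (X ∩ eps ⁻¹' {r}) (Y ∩ eps ⁻¹' {r}) (Z ∩ eps ⁻¹' {r}) e1 e2 e3 e4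
  rw [Pi.add_apply, chiFn_apply_eq, chiFn_apply_eq, chiFn_apply_eq]
  exact this

lemma chiFn_neg (eps : E → P) (X Y : Set E) : chiFn eps X Y = - chiFn eps Y X := by
  funext r
  simp only [chiFn, Pi.neg_apply]
  ring

lemma chiFn_self (eps : E → P) (X : Set E) : chiFn eps X X = 0 := by
  funext r
  simp [chiFn]

open Classical in
lemma chiFn_of_diff (eps : E → P) {X Y : Set E} (hXY : X ⊆ Y) (s : Finset E)
    (hs : Y \ X = ↑s) (r : P) :
    chiFn eps X Y r = (((s.filter (fun c => eps c = r)).card : ℤ)) := by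
  unfold chiFn
  have hmem : ∀ x, x ∈ Y \ X ↔ x ∈ s := fun x => by rw [← Finset.mem_coe, ← hs]
  have h1 : (X \ Y) ∩ eps ⁻¹' {r} = ∅ := by
    ext x
    simp only [Set.mem_inter_iff, Set.mem_diff, Set.mem_empty_iff_false, iff_false, not_and]
    rintro ⟨hx, hxy⟩
    exact absurd (hXY hx) hxy
  have h2 : (Y \ X) ∩ eps ⁻¹' {r} = ↑(s.filter (fun c => eps c = r)) := by
    ext x
    simp only [Set.mem_inter_iff, Set.mem_preimage, Set.mem_singleton_iff, Finset.coe_filter,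
      Set.mem_setOf_eq, hmem x]
  rw [h1, h2, Set.ncard_coe_finset]
  simp

open Classical in
lemma chi_union_single [DecidableEq P] (eps : E → P) {F : Set E} {γ : E} (hγ : γ ∉ F) :
    chiFn eps F (F ∪ {γ}) = fun r => if r = eps γ then 1 else 0 := by
  funext r
  have hs : (F ∪ {γ}) \ F = ↑({γ} : Finset E) := by
    ext x
    simp only [Set.mem_diff, Set.mem_union, Set.mem_singleton_iff, Finset.coe_singleton]
    constructor
    · rintro ⟨h | h, hF⟩
      · exact absurd h hF
      · exact h
    · rintro rfl
      exact ⟨Or.inr rfl, hγ⟩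
  rw [chiFn_of_diff eps Set.subset_union_left _ hs, Finset.filter_singleton]
  by_cases h : eps γ = r
  · rw [if_pos h, if_pos h.symm]
    simp
  · have h' : ¬ (r = eps γ) := fun hh => h hh.symm
    rw [if_neg h, if_neg h']
    simp

end ChiLemmas

section ReflActLemmas
variable {P : Type*} [Fintype P] [DecidableEq P]

lemma reflAct_single (A : P → P → ℤ) (p q : P) :
    reflAct A p (fun r => if r = q then (1:ℤ) else 0) =
      fun r => if r = p then ((if p = q then (1:ℤ) else 0) - A p q)
               else if r = q then 1 else 0 := by
  funext r
  unfold reflAct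
  by_cases hr : r = p
  · rw [if_pos hr, if_pos hr]
    congr 1
    have h : ∀ q' ∈ Finset.univ, A p q' * (if q' = q then (1:ℤ) else 0)
        = if q' = q then A p q' else 0 := by
      intro q' _
      split <;> ring
    rw [Finset.sum_congr rfl h, Finset.sum_ite_eq' Finset.univ q (fun q' => A p q')]
    simp
  · rw [if_neg hr, if_neg hr]

lemma reflAct_add (A : P → P → ℤ) (p : P) (v w : P → ℤ) :
    reflAct A p (v + w) = reflAct A p v + reflAct A p w := by
  funext r
  unfold reflAct
  by_cases hr : r = p
  · rw [if_pos hr]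
    simp only [Pi.add_apply, if_pos hr, mul_add, Finset.sum_add_distrib]
    ring
  · simp [if_neg hr]

lemma reflAct_neg (A : P → P → ℤ) (p : P) (v : P → ℤ) :
    reflAct A p (-v) = - reflAct A p v := by
  funext r
  unfold reflAct
  by_cases hr : r = p
  · simp only [Pi.neg_apply, if_pos hr, mul_neg, Finset.sum_neg_distrib]
    ring
  · simp [if_neg hr]

lemma reflAct_zero (A : P → P → ℤ) (p : P) :
    reflAct A p (0 : P → ℤ) = 0 := by
  funext r
  unfold reflAct
  by_cases hr : r = p <;> simp [hr]

end ReflActLemmas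


section Heap

variable {P E : Type*} [PartialOrder E] [LocallyFiniteOrder E]
  {A : P → P → ℤ} {eps : E → P}

lemma adj_symm (hA : IsGCM A) {p q : P} (h : Adj A p q) : Adj A q p :=
  ⟨h.1.symm, fun h0 => h.2 ((hA.2.2.1 p q).mpr h0)⟩

lemma rtg_le {x y : E}
    (h : Relation.ReflTransGen
      (fun x y : E => x ≤ y ∧ (eps x = eps y ∨ Adj A (eps x) (eps y))) x y) : x ≤ y := by
  induction h with
  | refl => exact le_refl _
  | tail _ step ih => exact le_trans ih step.1

lemma below_mem (hE : IsFullHeap A eps) {F : Set E} (hF : IsIdeal F) {b : E}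
    (hS : ∀ y, y < b → (eps y = eps b ∨ Adj A (eps y) (eps b)) → y ∈ F) :
    ∀ x, x < b → x ∈ F := by
  have key : ∀ a, Relation.ReflTransGen
      (fun x y : E => x ≤ y ∧ (eps x = eps y ∨ Adj A (eps x) (eps y))) a b →
      a < b → a ∈ F := by
    intro a h
    induction h using Relation.ReflTransGen.head_induction_on with
    | refl => exact fun hh => absurd hh (lt_irrefl b)
    | @head a' c step tail ih =>
      intro hab
      by_cases hc : c = b
      · subst hc
        exact hS a' hab step.2
      · exact hF (ih (lt_of_le_of_ne (rtg_le tail) hc)) step.1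
  intro x hx
  exact key x ((hE.le_generated x b).mp hx.le) hx

lemma above_not_mem (hE : IsFullHeap A eps) {F : Set E} (hF : IsIdeal F) {a : E}
    (hS : ∀ y, a < y → (eps a = eps y ∨ Adj A (eps a) (eps y)) → y ∉ F) :
    ∀ x, a < x → x ∉ F := by
  have key : ∀ x, Relation.ReflTransGen
      (fun x y : E => x ≤ y ∧ (eps x = eps y ∨ Adj A (eps x) (eps y))) a x →
      a < x → x ∉ F := by
    intro x h
    induction h with
    | refl => exact fun hh => absurd hh (lt_irrefl a)
    | @tail y x' hay step ih =>
      intro hax hxF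
      by_cases hy : y = a
      · subst hy
        exact hS x' hax step.2 hxF
      · exact ih (lt_of_le_of_ne (rtg_le hay) (Ne.symm hy)) (hF hxF step.1)
  intro x hx
  exact key x ((hE.le_generated a x).mp hx.le) hx

/-- A frame for an ideal `F` at vertex `p`: the maximum `a` of `F` in the fibre of `p`
and the minimum `b` of the complement of `F` in the fibre of `p`. -/
structure Frame (eps : E → P) (p : P) (F : Set E) where
  a : E
  b : E
  haF : a ∈ F
  hεa : eps a = p
  hmax : ∀ c ∈ F, eps c = p → c ≤ a
  hbF : b ∉ F
  hεb : eps b = p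
  hmin : ∀ c, c ∉ F → eps c = p → b ≤ c

lemma exists_frame (hE : IsFullHeap A eps) {F : Set E} (hF : IsProperIdeal eps F) (p : P) :
    Nonempty (Frame eps p F) := by
  classical
  obtain ⟨a0, ha0p, ha0F⟩ := (hF.2 p).1
  obtain ⟨b0, hb0p, hb0F⟩ := (hF.2 p).2
  have hub : ∀ c ∈ F, eps c = p → c ≤ b0 := by
    intro c hc hcp
    rcases hE.comparable c b0 (Or.inl (hcp.trans hb0p.symm)) with h | h
    · exact h
    · exact absurd (hF.1 hc h) hb0F
  have hlb : ∀ c, c ∉ F → eps c = p → a0 ≤ c := by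
    intro c hc hcp
    rcases hE.comparable a0 c (Or.inl (ha0p.trans hcp.symm)) with h | h
    · exact h
    · exact absurd (hF.1 ha0F h) hc
  have hab : a0 ≤ b0 := hub a0 ha0F ha0p
  set s1 := (Finset.Icc a0 b0).filter (fun c => c ∈ F ∧ eps c = p) with hs1
  have ha0s : a0 ∈ s1 := by
    simp only [hs1, Finset.mem_filter, Finset.mem_Icc]
    exact ⟨⟨le_refl _, hab⟩, ha0F, ha0p⟩
  set s2 := (Finset.Icc a0 b0).filter (fun c => c ∉ F ∧ eps c = p) with hs2
  have hb0s : b0 ∈ s2 := by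
    simp only [hs2, Finset.mem_filter, Finset.mem_Icc]
    exact ⟨⟨hab, le_refl _⟩, hb0F, hb0p⟩
  have hne1 : s1.Nonempty := ⟨a0, ha0s⟩
  have hne2 : s2.Nonempty := ⟨b0, hb0s⟩
  obtain ⟨m, hms, hmmax⟩ : ∃ m ∈ s1, ∀ x ∈ s1, ¬ m < x := by
    obtain ⟨m, hm⟩ := Finset.exists_maximal hne1
    exact ⟨m, hm.1, fun x hx hlt => hlt.not_ge (hm.2 hx hlt.le)⟩
  obtain ⟨m', hm's, hmmin⟩ : ∃ m ∈ s2, ∀ x ∈ s2, ¬ x < m := by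
    obtain ⟨m, hm⟩ := Finset.exists_minimal hne2
    exact ⟨m, hm.1, fun x hx hlt => hlt.not_ge (hm.2 hx hlt.le)⟩
  have hm := hms
  have hm' := hm's
  simp only [hs1, Finset.mem_filter, Finset.mem_Icc] at hm
  simp only [hs2, Finset.mem_filter, Finset.mem_Icc] at hm'
  refine ⟨⟨m, m', hm.2.1, hm.2.2, ?_, hm'.2.1, hm'.2.2, ?_⟩⟩
  · intro c hc hcp
    rcases hE.comparable c m (Or.inl (hcp.trans hm.2.2.symm)) with h | h
    · exact h
    · have hcs : c ∈ s1 := by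
        simp only [hs1, Finset.mem_filter, Finset.mem_Icc]
        exact ⟨⟨le_trans hm.1.1 h, hub c hc hcp⟩, hc, hcp⟩
      rcases h.lt_or_eq with hlt | heq
      · exact absurd hlt (hmmax c hcs)
      · exact heq.ge
  · intro c hc hcp
    rcases hE.comparable m' c (Or.inl (hm'.2.2.trans hcp.symm)) with h | h
    · exact h
    · have hcs : c ∈ s2 := by
        simp only [hs2, Finset.mem_filter, Finset.mem_Icc]
        exact ⟨⟨hlb c hc hcp, le_trans h hm'.1.2⟩, hc, hcp⟩
      rcases h.lt_or_eq with hlt | heq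
      · exact absurd hlt (hmmin c hcs)
      · exact heq.ge

lemma Frame.lt (hE : IsFullHeap A eps) {p : P} {F : Set E} (hF : IsIdeal F)
    (f : Frame eps p F) : f.a < f.b := by
  rcases hE.comparable f.a f.b (Or.inl (f.hεa.trans f.hεb.symm)) with h | h
  · exact lt_of_le_of_ne h (fun hh => f.hbF (hh ▸ f.haF))
  · exact absurd (hF f.haF h) f.hbF

lemma Frame.ioo_ne {p : P} {F : Set E} (f : Frame eps p F) :
    ∀ c, f.a < c → c < f.b → eps c ≠ p := by
  intro c h1 h2 hc
  by_cases hcF : c ∈ F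
  · exact absurd (f.hmax c hcF hc) h1.not_ge
  · exact absurd (f.hmin c hcF hc) h2.not_ge

open Classical in
/-- The set of elements between `f.a` and `f.b` whose label is adjacent to `p`. -/
noncomputable def frameS (A : P → P → ℤ) {p : P} {F : Set E} (f : Frame eps p F) : Finset E :=
  (Finset.Ioo f.a f.b).filter (fun c => A p (eps c) ≠ 0)

lemma frameS_sum (hE : IsFullHeap A eps) {p : P} {F : Set E} (hF : IsIdeal F)
    (f : Frame eps p F) : ∑ c ∈ frameS A f, A p (eps c) = -2 := by
  classical
  have hsum := hE.interval f.a f.b (f.lt hE hF) (f.hεa.trans f.hεb.symm)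
    (fun c h1 h2 => by rw [f.hεa]; exact f.ioo_ne c h1 h2)
  rw [f.hεa] at hsum
  rw [frameS]
  rw [Finset.sum_filter_ne_zero]
  exact hsum

lemma frameS_mem {p : P} {F : Set E} {f : Frame eps p F} {c : E} (hc : c ∈ frameS A f) :
    (f.a < c ∧ c < f.b) ∧ A p (eps c) ≠ 0 := by
  classical
  have := hc
  rw [frameS, Finset.mem_filter, Finset.mem_Ioo] at this
  exact this

lemma mem_frameS {p : P} {F : Set E} {f : Frame eps p F} {c : E}
    (h1 : f.a < c) (h2 : c < f.b) (h3 : A p (eps c) ≠ 0) : c ∈ frameS A f := by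
  classical
  rw [frameS, Finset.mem_filter, Finset.mem_Ioo]
  exact ⟨⟨h1, h2⟩, h3⟩

lemma frameS_vals (hA : IsGCM A) {p : P} {F : Set E} {f : Frame eps p F} {c : E}
    (hc : c ∈ frameS A f) : A p (eps c) = -1 ∨ A p (eps c) = -2 := by
  obtain ⟨⟨h1, h2⟩, h3⟩ := frameS_mem hc
  have hne : eps c ≠ p := f.ioo_ne c h1 h2
  have hle : A p (eps c) ≤ 0 := hA.2.1 p (eps c) (Ne.symm hne)
  rcases hA.2.2.2 p (eps c) with h | h | h | h
  · omega
  · exact absurd h h3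
  · exact Or.inl h
  · exact Or.inr h

lemma frameS_nonempty (hA : IsGCM A) (hE : IsFullHeap A eps) {p : P} {F : Set E}
    (hF : IsIdeal F) (f : Frame eps p F) : (frameS A f).Nonempty := by
  rcases Finset.eq_empty_or_nonempty (frameS A f) with h | h
  · have := frameS_sum hE hF f
    rw [h, Finset.sum_empty] at this
    omega
  · exact h

lemma frameS_adj (hA : IsGCM A) {p : P} {F : Set E} {f : Frame eps p F} {c : E}
    (hc : c ∈ frameS A f) : Adj A p (eps c) := by
  obtain ⟨⟨h1, h2⟩, h3⟩ := frameS_mem hc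
  exact ⟨Ne.symm (f.ioo_ne c h1 h2), h3⟩

/-- Removal of `f.a` keeps `F` an ideal iff no adjacent-labelled element in the open
interval lies in `F`. -/
lemma rem_iff (hA : IsGCM A) (hE : IsFullHeap A eps) {p : P} {F : Set E}
    (hF : IsIdeal F) (f : Frame eps p F) :
    IsIdeal (F \ {f.a}) ↔ ∀ c ∈ frameS A f, c ∉ F := by
  constructor
  · intro hid c hc hcF
    obtain ⟨⟨h1, h2⟩, _⟩ := frameS_mem hc
    have hca : c ∈ F \ {f.a} := ⟨hcF, fun hh => absurd (hh ▸ h1) (lt_irrefl _)⟩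
    have := hid hca (le_of_lt h1)
    exact this.2 rfl
  · intro h
    have hmaxi : ∀ x, f.a < x → x ∉ F := by
      apply above_not_mem hE hF
      intro y hy hrel
      rw [f.hεa] at hrel
      rcases hrel with h1 | h1
      · intro hyF
        exact absurd (f.hmax y hyF h1.symm) hy.not_ge
      · intro hyF
        have hcomp : y ≤ f.b ∨ f.b ≤ y := by
          refine hE.comparable y f.b (Or.inr ?_)
          rw [f.hεb]
          exact adj_symm hA h1
        rcases hcomp with h2 | h2
        · have hne : y ≠ f.b := fun hh => h1.1 (by subst hh; exact f.hεb.symm)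
          exact h y (mem_frameS hy (lt_of_le_of_ne h2 hne) h1.2) hyF
        · exact f.hbF (hF hyF h2)
    intro x hx y hy
    refine ⟨hF hx.1 hy, ?_⟩
    intro hya
    simp only [Set.mem_singleton_iff] at hya
    subst hya
    have hne : f.a ≠ x := fun hh => hx.2 (Set.mem_singleton_iff.mpr hh.symm)
    exact absurd hx.1 (hmaxi x (lt_of_le_of_ne hy hne))

/-- Adding `f.b` keeps `F` an ideal iff every adjacent-labelled element in the open
interval lies in `F`. -/
lemma add_iff (hA : IsGCM A) (hE : IsFullHeap A eps) {p : P} {F : Set E}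
    (hF : IsIdeal F) (f : Frame eps p F) :
    IsIdeal (F ∪ {f.b}) ↔ ∀ c ∈ frameS A f, c ∈ F := by
  constructor
  · intro hid c hc
    obtain ⟨⟨h1, h2⟩, _⟩ := frameS_mem hc
    have := hid (Or.inr rfl : f.b ∈ F ∪ {f.b}) (le_of_lt h2)
    rcases this with h | h
    · exact h
    · simp only [Set.mem_singleton_iff] at h
      exact absurd (h ▸ h2) (lt_irrefl _)
  · intro h
    have hbelow : ∀ x, x < f.b → x ∈ F := by
      apply below_mem hE hF
      intro y hy hrel
      rw [f.hεb] at hrel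
      rcases hrel with h1 | h1
      · by_contra hyF
        exact absurd (f.hmin y hyF h1) hy.not_ge
      · have hcomp : y ≤ f.a ∨ f.a ≤ y := by
          refine hE.comparable y f.a (Or.inr ?_)
          rw [f.hεa]
          exact h1
        rcases hcomp with h2 | h2
        · exact hF f.haF h2
        · have hne : f.a ≠ y := fun hh => h1.1 (hh ▸ f.hεa)
          exact h y (mem_frameS (lt_of_le_of_ne h2 hne) hy (adj_symm hA h1).2)
    intro x hx y hy
    rcases hx with hxF | hxb
    · exact Or.inl (hF hxF hy)
    · simp only [Set.mem_singleton_iff] at hxb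
      subst hxb
      rcases eq_or_lt_of_le hy with h2 | h2
      · exact Or.inr (Set.mem_singleton_iff.mpr h2)
      · exact Or.inl (hbelow y h2)

lemma rem_unique (hE : IsFullHeap A eps) {p : P} {F : Set E} {x y : E}
    (hx : x ∈ F ∧ eps x = p ∧ IsIdeal (F \ {x}))
    (hy : y ∈ F ∧ eps y = p ∧ IsIdeal (F \ {y})) : x = y := by
  rcases hE.comparable x y (Or.inl (hx.2.1.trans hy.2.1.symm)) with h | h
  · by_contra hne
    have hmem : y ∈ F \ {x} := ⟨hy.1, fun hh => hne (Set.mem_singleton_iff.mp hh).symm⟩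
    have hxx := hx.2.2 hmem h
    exact hxx.2 rfl
  · by_contra hne
    have hmem : x ∈ F \ {y} := ⟨hx.1, fun hh => hne (Set.mem_singleton_iff.mp hh)⟩
    have hyy := hy.2.2 hmem h
    exact hyy.2 rfl

lemma add_unique (hE : IsFullHeap A eps) {p : P} {F : Set E} {x y : E}
    (hx : x ∉ F ∧ eps x = p ∧ IsIdeal (F ∪ {x}))
    (hy : y ∉ F ∧ eps y = p ∧ IsIdeal (F ∪ {y})) : x = y := by
  rcases hE.comparable x y (Or.inl (hx.2.1.trans hy.2.1.symm)) with h | h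
  · by_contra hne
    rcases hy.2.2 (Or.inr rfl : y ∈ F ∪ {y}) h with hh | hh
    · exact hx.1 hh
    · exact hne (Set.mem_singleton_iff.mp hh)
  · by_contra hne
    rcases hx.2.2 (Or.inr rfl : x ∈ F ∪ {x}) h with hh | hh
    · exact hy.1 hh
    · exact hne (Set.mem_singleton_iff.mp hh).symm

lemma Sact_eq_rem (hE : IsFullHeap A eps) {p : P} {F : Set E} {a : E}
    (ha : a ∈ F) (hεa : eps a = p) (hid : IsIdeal (F \ {a})) :
    Sact eps p F = F \ {a} := by
  have hex : ∃ x, x ∈ F ∧ eps x = p ∧ IsIdeal (F \ {x}) := ⟨a, ha, hεa, hid⟩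
  rw [Sact, dif_pos hex]
  rw [rem_unique hE hex.choose_spec ⟨ha, hεa, hid⟩]

lemma Sact_eq_add (hE : IsFullHeap A eps) {p : P} {F : Set E} {b : E}
    (hnorem : ¬ ∃ x, x ∈ F ∧ eps x = p ∧ IsIdeal (F \ {x}))
    (hb : b ∉ F) (hεb : eps b = p) (hid : IsIdeal (F ∪ {b})) :
    Sact eps p F = F ∪ {b} := by
  have hex : ∃ x, x ∉ F ∧ eps x = p ∧ IsIdeal (F ∪ {x}) := ⟨b, hb, hεb, hid⟩
  rw [Sact, dif_neg hnorem, dif_pos hex]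
  rw [add_unique hE hex.choose_spec ⟨hb, hεb, hid⟩]

lemma Sact_eq_id {p : P} {F : Set E}
    (hnorem : ¬ ∃ x, x ∈ F ∧ eps x = p ∧ IsIdeal (F \ {x}))
    (hnoadd : ¬ ∃ x, x ∉ F ∧ eps x = p ∧ IsIdeal (F ∪ {x})) :
    Sact eps p F = F := by
  rw [Sact, dif_neg hnorem, dif_neg hnoadd]

/-- From a frame, any removable element equals `f.a`; so no removable element exists
iff removing `f.a` fails. -/
lemma norem_of_frame (hE : IsFullHeap A eps) {p : P} {F : Set E} (f : Frame eps p F)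
    (h : ¬ IsIdeal (F \ {f.a})) :
    ¬ ∃ x, x ∈ F ∧ eps x = p ∧ IsIdeal (F \ {x}) := by
  rintro ⟨x, hx⟩
  have hxa : x = f.a := by
    have hle : x ≤ f.a := f.hmax x hx.1 hx.2.1
    rcases hle.lt_or_eq with hlt | heq
    · have : f.a ∈ F \ {x} := ⟨f.haF, fun hh => absurd ((Set.mem_singleton_iff.mp hh) ▸ hlt) (lt_irrefl _)⟩
      have hxx := hx.2.2 this hle
      exact absurd rfl hxx.2
    · exact heq
  exact h (hxa ▸ hx.2.2)

lemma noadd_of_frame (hE : IsFullHeap A eps) {p : P} {F : Set E} (f : Frame eps p F)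
    (h : ¬ IsIdeal (F ∪ {f.b})) :
    ¬ ∃ x, x ∉ F ∧ eps x = p ∧ IsIdeal (F ∪ {x}) := by
  rintro ⟨x, hx⟩
  have hxb : x = f.b := by
    have hle : f.b ≤ x := f.hmin x hx.1 hx.2.1
    rcases hle.lt_or_eq with hlt | heq
    · rcases hx.2.2 (Or.inr rfl : x ∈ F ∪ {x}) hle with hh | hh
      · exact absurd hh f.hbF
      · exact absurd (Set.mem_singleton_iff.mp hh) (ne_of_lt hlt)
    · exact heq.symm
  exact h (hxb ▸ hx.2.2)


lemma removable_eq_a (hE : IsFullHeap A eps) {p : P} {F : Set E} (f : Frame eps p F)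
    {x : E} (hx : x ∈ F) (hεx : eps x = p) (hid : IsIdeal (F \ {x})) : x = f.a := by
  have hle : x ≤ f.a := f.hmax x hx hεx
  rcases hle.lt_or_eq with hlt | heq
  · have hmem : f.a ∈ F \ {x} :=
      ⟨f.haF, fun hh => absurd ((Set.mem_singleton_iff.mp hh) ▸ hlt) (lt_irrefl _)⟩
    have hxx := hid hmem hle
    exact absurd rfl hxx.2
  · exact heq

lemma addable_eq_b (hE : IsFullHeap A eps) {p : P} {F : Set E} (f : Frame eps p F)
    {x : E} (hx : x ∉ F) (hεx : eps x = p) (hid : IsIdeal (F ∪ {x})) : x = f.b := by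
  have hle : f.b ≤ x := f.hmin x hx hεx
  rcases hle.lt_or_eq with hlt | heq
  · rcases hid (Or.inr rfl : x ∈ F ∪ {x}) hle with hh | hh
    · exact absurd hh f.hbF
    · exact absurd (Set.mem_singleton_iff.mp hh) (ne_of_lt hlt)
  · exact heq.symm

/-- Transport a frame along adding an element with a different label. -/
def Frame.push {p : P} {F : Set E} (f : Frame eps p F) {γ : E} (hγ : γ ∉ F)
    (hne : eps γ ≠ p) : Frame eps p (F ∪ {γ}) where
  a := f.a
  b := f.b
  haF := Or.inl f.haF
  hεa := f.hεa
  hmax := by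
    rintro c (hc | hc) hcp
    · exact f.hmax c hc hcp
    · exact absurd ((Set.mem_singleton_iff.mp hc) ▸ hcp) hne
  hbF := by
    rintro (h | h)
    · exact f.hbF h
    · exact hne (((Set.mem_singleton_iff.mp h) ▸ f.hεb : eps γ = p))
  hεb := f.hεb
  hmin := by
    intro c hc hcp
    exact f.hmin c (fun hcF => hc (Or.inl hcF)) hcp

lemma frameS_push {p : P} {F : Set E} (f : Frame eps p F) {γ : E} (hγ : γ ∉ F)
    (hne : eps γ ≠ p) : frameS A (f.push hγ hne) = frameS A f := rfl

lemma key_step [Fintype P] [DecidableEq P] (hA : IsGCM A) (hE : IsFullHeap A eps) (p : P)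
    {F : Set E} (hF : IsProperIdeal eps F) {γ : E} (hγ : γ ∉ F)
    (hF' : IsProperIdeal eps (F ∪ {γ})) :
    chiFn eps (Sact eps p F) (Sact eps p (F ∪ {γ})) = reflAct A p (chiFn eps F (F ∪ {γ})) := by
  classical
  obtain ⟨f⟩ := exists_frame hE hF p
  rw [chi_union_single eps hγ, reflAct_single A]
  by_cases hqp : eps γ = p
  · -- Case 1 : the new element has label p, so it must be f.b
    have hγb : γ = f.b := addable_eq_b hE f hγ hqp hF'.1
    have hdiff : (F ∪ {γ}) \ {γ} = F := by
      ext x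
      simp only [Set.mem_diff, Set.mem_union, Set.mem_singleton_iff]
      constructor
      · rintro ⟨h | h, hne⟩
        · exact h
        · exact absurd h hne
      · intro hx
        exact ⟨Or.inl hx, fun hh => hγ (hh ▸ hx)⟩
    have hid' : IsIdeal (F ∪ {f.b}) := hγb ▸ hF'.1
    have hSsub : ∀ c ∈ frameS A f, c ∈ F := (add_iff hA hE hF.1 f).mp hid'
    obtain ⟨c0, hc0⟩ := frameS_nonempty hA hE hF.1 f
    have hrem_fail : ¬ IsIdeal (F \ {f.a}) := fun h =>
      ((rem_iff hA hE hF.1 f).mp h c0 hc0) (hSsub c0 hc0)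
    have hSF : Sact eps p F = F ∪ {f.b} :=
      Sact_eq_add hE (norem_of_frame hE f hrem_fail) f.hbF f.hεb hid'
    have hSF' : Sact eps p (F ∪ {γ}) = (F ∪ {γ}) \ {γ} :=
      Sact_eq_rem hE (Or.inr rfl) hqp (by rw [hdiff]; exact hF.1)
    rw [hSF, hSF', hdiff, ← hγb]
    rw [chiFn_neg eps, chi_union_single eps hγ]
    funext r
    simp only [Pi.neg_apply]
    by_cases hr : r = p
    · rw [if_pos hr, if_pos ((hqp.trans hr.symm).symm : r = eps γ),
        if_pos (hqp.symm : p = eps γ), hqp, hA.1]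
      norm_num
    · rw [if_neg hr, if_neg (fun hh : r = eps γ => hr (hh.trans hqp))]
      norm_num
  · -- the new element has a label different from p
    obtain ⟨f', hf'a, hf'b, hf'S⟩ :
        ∃ f' : Frame eps p (F ∪ {γ}), f'.a = f.a ∧ f'.b = f.b ∧ frameS A f' = frameS A f :=
      ⟨f.push hγ hqp, rfl, rfl, rfl⟩
    have hγa : γ ≠ f.a := fun hh => hqp (hh ▸ f.hεa)
    have hγb : γ ≠ f.b := fun hh => hqp (hh ▸ f.hεb)
    by_cases hq0 : A p (eps γ) = 0
    · -- Case 2 : non-adjacent label; S_p does the same thing to both ideals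
      have hγS : γ ∉ frameS A f := fun h => (frameS_mem h).2 hq0
      have hpq : p ≠ eps γ := fun hh => hqp hh.symm
      by_cases h1 : IsIdeal (F \ {f.a})
      · -- removal case
        have hS0 : ∀ c ∈ frameS A f, c ∉ F := (rem_iff hA hE hF.1 f).mp h1
        have hS0' : ∀ c ∈ frameS A f', c ∉ F ∪ {γ} := by
          rw [hf'S]
          intro c hc
          rintro (h | h)
          · exact hS0 c hc h
          · exact hγS ((Set.mem_singleton_iff.mp h) ▸ hc)
        have h1' : IsIdeal ((F ∪ {γ}) \ {f'.a}) := (rem_iff hA hE hF'.1 f').mpr hS0'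
        rw [hf'a] at h1'
        have hSF : Sact eps p F = F \ {f.a} := Sact_eq_rem hE f.haF f.hεa h1
        have hSF' : Sact eps p (F ∪ {γ}) = (F ∪ {γ}) \ {f.a} :=
          Sact_eq_rem hE (Or.inl f.haF) f.hεa h1'
        rw [hSF, hSF']
        have hXY : F \ {f.a} ⊆ (F ∪ {γ}) \ {f.a} := fun x hx => ⟨Or.inl hx.1, hx.2⟩
        have hs : ((F ∪ {γ}) \ {f.a}) \ (F \ {f.a}) = ↑({γ} : Finset E) := by
          ext x
          simp only [Set.mem_diff, Set.mem_union, Set.mem_singleton_iff, Finset.coe_singleton,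
            not_and, not_not]
          constructor
          · rintro ⟨⟨h | h, hne⟩, h2⟩
            · exact absurd (h2 h) hne
            · exact h
          · rintro rfl
            exact ⟨⟨Or.inr rfl, hγa⟩, fun hh => absurd hh hγ⟩
        funext r
        rw [chiFn_of_diff eps hXY _ hs r, Finset.filter_singleton]
        by_cases hr : r = p
        · rw [if_pos hr, if_neg hpq, if_neg (fun hh : eps γ = r => hqp (hh.trans hr)), hq0]
          norm_num
        · rw [if_neg hr]
          by_cases hrq : r = eps γ
          · rw [if_pos hrq, if_pos hrq.symm]
            norm_num
          · rw [if_neg hrq, if_neg (fun hh : eps γ = r => hrq hh.symm)]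
            norm_num
      · have hnorem := norem_of_frame hE f h1
        have hex1 : ∃ c ∈ frameS A f, c ∈ F := by
          by_contra hcon
          push_neg at hcon
          exact h1 ((rem_iff hA hE hF.1 f).mpr hcon)
        obtain ⟨c1, hc1S, hc1F⟩ := hex1
        have hnorem' : ¬ ∃ x, x ∈ F ∪ {γ} ∧ eps x = p ∧ IsIdeal ((F ∪ {γ}) \ {x}) := by
          apply norem_of_frame hE f'
          intro h
          have := (rem_iff hA hE hF'.1 f').mp h c1 (by rw [hf'S]; exact hc1S)
          exact this (Or.inl hc1F)
        by_cases h2 : IsIdeal (F ∪ {f.b})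
        · -- addition case
          have hS1 : ∀ c ∈ frameS A f, c ∈ F := (add_iff hA hE hF.1 f).mp h2
          have h2' : IsIdeal ((F ∪ {γ}) ∪ {f'.b}) := by
            apply (add_iff hA hE hF'.1 f').mpr
            rw [hf'S]
            intro c hc
            exact Or.inl (hS1 c hc)
          rw [hf'b] at h2'
          have hSF : Sact eps p F = F ∪ {f.b} := Sact_eq_add hE hnorem f.hbF f.hεb h2
          have hSF' : Sact eps p (F ∪ {γ}) = (F ∪ {γ}) ∪ {f.b} := by
            apply Sact_eq_add hE hnorem' _ f.hεb h2'
            rintro (h | h)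
            · exact f.hbF h
            · exact hγb (Set.mem_singleton_iff.mp h).symm
          rw [hSF, hSF']
          have hXY : F ∪ {f.b} ⊆ (F ∪ {γ}) ∪ {f.b} := by
            rintro x (h | h)
            · exact Or.inl (Or.inl h)
            · exact Or.inr h
          have hs : ((F ∪ {γ}) ∪ {f.b}) \ (F ∪ {f.b}) = ↑({γ} : Finset E) := by
            ext x
            simp only [Set.mem_diff, Set.mem_union, Set.mem_singleton_iff, Finset.coe_singleton,
              not_or]
            constructor
            · rintro ⟨(h | h) | h, h2, h3⟩
              · exact absurd h h2
              · exact h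
              · exact absurd h h3
            · rintro rfl
              exact ⟨Or.inl (Or.inr rfl), hγ, hγb⟩
          funext r
          rw [chiFn_of_diff eps hXY _ hs r, Finset.filter_singleton]
          by_cases hr : r = p
          · rw [if_pos hr, if_neg hpq, if_neg (fun hh : eps γ = r => hqp (hh.trans hr)), hq0]
            norm_num
          · rw [if_neg hr]
            by_cases hrq : r = eps γ
            · rw [if_pos hrq, if_pos hrq.symm]
              norm_num
            · rw [if_neg hrq, if_neg (fun hh : eps γ = r => hrq hh.symm)]
              norm_num
        · -- identity case
          have hnoadd := noadd_of_frame hE f h2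
          obtain ⟨c2, hc2S, hc2F⟩ : ∃ c ∈ frameS A f, c ∉ F := by
            by_contra hcon
            push_neg at hcon
            exact h2 ((add_iff hA hE hF.1 f).mpr hcon)
          have hnoadd' : ¬ ∃ x, x ∉ F ∪ {γ} ∧ eps x = p ∧ IsIdeal ((F ∪ {γ}) ∪ {x}) := by
            apply noadd_of_frame hE f'
            intro h
            have := (add_iff hA hE hF'.1 f').mp h c2 (by rw [hf'S]; exact hc2S)
            rcases this with h | h
            · exact hc2F h
            · exact hγS ((Set.mem_singleton_iff.mp h) ▸ hc2S)
          have hSF : Sact eps p F = F := Sact_eq_id hnorem hnoadd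
          have hSF' : Sact eps p (F ∪ {γ}) = F ∪ {γ} := Sact_eq_id hnorem' hnoadd'
          rw [hSF, hSF']
          have hXY : F ⊆ F ∪ {γ} := Set.subset_union_left
          have hs : (F ∪ {γ}) \ F = ↑({γ} : Finset E) := by
            ext x
            simp only [Set.mem_diff, Set.mem_union, Set.mem_singleton_iff, Finset.coe_singleton]
            constructor
            · rintro ⟨h | h, h2⟩
              · exact absurd h h2
              · exact h
            · rintro rfl
              exact ⟨Or.inr rfl, hγ⟩
          funext r
          rw [chiFn_of_diff eps hXY _ hs r, Finset.filter_singleton]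
          by_cases hr : r = p
          · rw [if_pos hr, if_neg hpq, if_neg (fun hh : eps γ = r => hqp (hh.trans hr)), hq0]
            norm_num
          · rw [if_neg hr]
            by_cases hrq : r = eps γ
            · rw [if_pos hrq, if_pos hrq.symm]
              norm_num
            · rw [if_neg hrq, if_neg (fun hh : eps γ = r => hrq hh.symm)]
              norm_num
    · -- Case 3 : adjacent label
      have hpq : p ≠ eps γ := fun hh => hqp hh.symm
      have hγa' : f.a < γ := by
        rcases hE.comparable γ f.a (Or.inr ⟨fun hh => hqp (hh.trans f.hεa), by
          intro hh
          exact hq0 ((hA.2.2.1 p (eps γ)).mpr (f.hεa ▸ hh))⟩) with h | h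
        · exact absurd (hF.1 f.haF h) hγ
        · exact lt_of_le_of_ne h (fun hh => hγa hh.symm)
      have hγb' : γ < f.b := by
        rcases hE.comparable γ f.b (Or.inr ⟨fun hh => hqp (hh.trans f.hεb), by
          intro hh
          rw [f.hεb] at hh
          exact hq0 ((hA.2.2.1 p (eps γ)).mpr hh)⟩) with h | h
        · exact lt_of_le_of_ne h hγb
        · rcases hF'.1 (Or.inr rfl : γ ∈ F ∪ {γ}) h with hh | hh
          · exact absurd hh f.hbF
          · exact absurd (Set.mem_singleton_iff.mp hh).symm hγb
      have hγS : γ ∈ frameS A f := mem_frameS hγa' hγb' hq0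
      have hsum := frameS_sum hE hF.1 f
      have hsplit : A p (eps γ) + ∑ c ∈ (frameS A f).erase γ, A p (eps c) = -2 := by
        rw [← Finset.add_sum_erase (frameS A f) (fun c => A p (eps c)) hγS] at hsum
        exact hsum
      have hnorem' : ¬ ∃ x, x ∈ F ∪ {γ} ∧ eps x = p ∧ IsIdeal ((F ∪ {γ}) \ {x}) := by
        apply norem_of_frame hE f'
        intro h
        exact ((rem_iff hA hE hF'.1 f').mp h γ (by rw [hf'S]; exact hγS)) (Or.inr rfl)
      rcases frameS_vals hA hγS with hval | hval
      · -- A p (eps γ) = -1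
        have hTsum : ∑ c ∈ (frameS A f).erase γ, A p (eps c) = -1 := by omega
        have hTne : ((frameS A f).erase γ).Nonempty := by
          rcases Finset.eq_empty_or_nonempty ((frameS A f).erase γ) with h | h
          · rw [h, Finset.sum_empty] at hTsum
            omega
          · exact h
        have hcard : ((frameS A f).erase γ).card = 1 := by
          have hle : ∑ c ∈ (frameS A f).erase γ, A p (eps c)
              ≤ ((frameS A f).erase γ).card • (-1 : ℤ) := by
            apply Finset.sum_le_card_nsmul
            intro c hc
            rcases frameS_vals hA (Finset.mem_of_mem_erase hc) with h | h <;> omega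
          have hge : 1 ≤ ((frameS A f).erase γ).card := Finset.card_pos.mpr hTne
          rw [hTsum] at hle
          simp only [nsmul_eq_mul, mul_neg, mul_one] at hle
          omega
        obtain ⟨δ, hTδ⟩ := Finset.card_eq_one.mp hcard
        have hδT : δ ∈ (frameS A f).erase γ := by
          rw [hTδ]
          exact Finset.mem_singleton_self δ
        have hδS : δ ∈ frameS A f := Finset.mem_of_mem_erase hδT
        have hδγ : δ ≠ γ := (Finset.mem_erase.mp hδT).1
        have hSmem : ∀ c ∈ frameS A f, c = γ ∨ c = δ := by
          intro c hc
          by_cases hcγ : c = γ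
          · exact Or.inl hcγ
          · right
            have hmem : c ∈ (frameS A f).erase γ := Finset.mem_erase.mpr ⟨hcγ, hc⟩
            rw [hTδ] at hmem
            exact Finset.mem_singleton.mp hmem
        by_cases hδF : δ ∈ F
        · -- S_p fixes F and adds f.b to F ∪ {γ}
          have hnorem := norem_of_frame hE f
            (fun h => ((rem_iff hA hE hF.1 f).mp h δ hδS) hδF)
          have hnoadd := noadd_of_frame hE f
            (fun h => hγ (((add_iff hA hE hF.1 f).mp h) γ hγS))
          have hSF : Sact eps p F = F := Sact_eq_id hnorem hnoadd
          have h2' : IsIdeal ((F ∪ {γ}) ∪ {f'.b}) := by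
            apply (add_iff hA hE hF'.1 f').mpr
            rw [hf'S]
            intro c hc
            rcases hSmem c hc with rfl | rfl
            · exact Or.inr rfl
            · exact Or.inl hδF
          rw [hf'b] at h2'
          have hSF' : Sact eps p (F ∪ {γ}) = (F ∪ {γ}) ∪ {f.b} := by
            apply Sact_eq_add hE hnorem' _ f.hεb h2'
            rintro (h | h)
            · exact f.hbF h
            · exact hγb (Set.mem_singleton_iff.mp h).symm
          rw [hSF, hSF']
          have hXY : F ⊆ (F ∪ {γ}) ∪ {f.b} := fun x hx => Or.inl (Or.inl hx)
          have hs : ((F ∪ {γ}) ∪ {f.b}) \ F = ↑({γ, f.b} : Finset E) := by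
            ext x
            simp only [Set.mem_diff, Set.mem_union, Set.mem_singleton_iff, Finset.coe_insert,
              Set.mem_insert_iff, Finset.coe_singleton]
            constructor
            · rintro ⟨(h | h) | h, h2⟩
              · exact absurd h h2
              · exact Or.inl h
              · exact Or.inr h
            · rintro (rfl | rfl)
              · exact ⟨Or.inl (Or.inr rfl), hγ⟩
              · exact ⟨Or.inr rfl, f.hbF⟩
          funext r
          rw [chiFn_of_diff eps hXY _ hs r, Finset.card_filter,
            Finset.sum_insert (by simp [hγb]), Finset.sum_singleton]
          by_cases hr : r = p
          · rw [if_pos hr, if_neg hpq, if_neg (fun hh : eps γ = r => hqp (hh.trans hr)),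
              if_pos (f.hεb.trans hr.symm : eps f.b = r), hval]
            norm_num
          · rw [if_neg hr]
            have hbr : ¬ (eps f.b = r) := fun hh => hr (hh.symm.trans f.hεb)
            by_cases hrq : r = eps γ
            · rw [if_pos hrq, if_pos hrq.symm, if_neg hbr]
              norm_num
            · rw [if_neg hrq, if_neg (fun hh : eps γ = r => hrq hh.symm), if_neg hbr]
              norm_num
        · -- S_p removes f.a from F and fixes F ∪ {γ}
          have h1 : IsIdeal (F \ {f.a}) := by
            apply (rem_iff hA hE hF.1 f).mpr
            intro c hc
            rcases hSmem c hc with rfl | rfl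
            · exact hγ
            · exact hδF
          have hSF : Sact eps p F = F \ {f.a} := Sact_eq_rem hE f.haF f.hεa h1
          have hnoadd' : ¬ ∃ x, x ∉ F ∪ {γ} ∧ eps x = p ∧ IsIdeal ((F ∪ {γ}) ∪ {x}) := by
            apply noadd_of_frame hE f'
            intro h
            have hmem := (add_iff hA hE hF'.1 f').mp h δ (by rw [hf'S]; exact hδS)
            rcases hmem with h | h
            · exact hδF h
            · exact hδγ (Set.mem_singleton_iff.mp h)
          have hSF' : Sact eps p (F ∪ {γ}) = F ∪ {γ} := Sact_eq_id hnorem' hnoadd'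
          rw [hSF, hSF']
          have hXY : F \ {f.a} ⊆ F ∪ {γ} := fun x hx => Or.inl hx.1
          have hs : (F ∪ {γ}) \ (F \ {f.a}) = ↑({f.a, γ} : Finset E) := by
            ext x
            simp only [Set.mem_diff, Set.mem_union, Set.mem_singleton_iff, Finset.coe_insert,
              Set.mem_insert_iff, Finset.coe_singleton, not_and, not_not]
            constructor
            · rintro ⟨h | h, h2⟩
              · exact Or.inl (h2 h)
              · exact Or.inr h
            · rintro (rfl | rfl)
              · exact ⟨Or.inl f.haF, fun _ => rfl⟩
              · exact ⟨Or.inr rfl, fun hh => absurd hh hγ⟩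
          funext r
          rw [chiFn_of_diff eps hXY _ hs r, Finset.card_filter,
            Finset.sum_insert (by simp only [Finset.mem_singleton]; exact fun hh => hγa hh.symm),
            Finset.sum_singleton]
          by_cases hr : r = p
          · rw [if_pos hr, if_neg hpq, if_pos (f.hεa.trans hr.symm : eps f.a = r),
              if_neg (fun hh : eps γ = r => hqp (hh.trans hr)), hval]
            norm_num
          · rw [if_neg hr]
            have har : ¬ (eps f.a = r) := fun hh => hr (hh.symm.trans f.hεa)
            by_cases hrq : r = eps γ
            · rw [if_pos hrq, if_pos hrq.symm, if_neg har]
              norm_num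
            · rw [if_neg hrq, if_neg (fun hh : eps γ = r => hrq hh.symm), if_neg har]
              norm_num
      · -- A p (eps γ) = -2 : γ is the only adjacent element
        have hTsum : ∑ c ∈ (frameS A f).erase γ, A p (eps c) = 0 := by omega
        have hTempty : (frameS A f).erase γ = ∅ := by
          rcases Finset.eq_empty_or_nonempty ((frameS A f).erase γ) with h | h
          · exact h
          · have hneg : ∑ c ∈ (frameS A f).erase γ, A p (eps c) < 0 := by
              apply Finset.sum_neg _ h
              intro c hc
              rcases frameS_vals hA (Finset.mem_of_mem_erase hc) with hh | hh <;> omega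
            omega
        have hSmem : ∀ c ∈ frameS A f, c = γ := by
          intro c hc
          by_contra hcγ
          have hmem : c ∈ (frameS A f).erase γ := Finset.mem_erase.mpr ⟨hcγ, hc⟩
          rw [hTempty] at hmem
          exact absurd hmem (Finset.notMem_empty c)
        have h1 : IsIdeal (F \ {f.a}) := (rem_iff hA hE hF.1 f).mpr
          (fun c hc => (hSmem c hc) ▸ hγ)
        have hSF : Sact eps p F = F \ {f.a} := Sact_eq_rem hE f.haF f.hεa h1
        have h2' : IsIdeal ((F ∪ {γ}) ∪ {f'.b}) := by
          apply (add_iff hA hE hF'.1 f').mpr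
          rw [hf'S]
          intro c hc
          rcases hSmem c hc with rfl
          exact Or.inr rfl
        rw [hf'b] at h2'
        have hSF' : Sact eps p (F ∪ {γ}) = (F ∪ {γ}) ∪ {f.b} := by
          apply Sact_eq_add hE hnorem' _ f.hεb h2'
          rintro (h | h)
          · exact f.hbF h
          · exact hγb (Set.mem_singleton_iff.mp h).symm
        rw [hSF, hSF']
        have hXY : F \ {f.a} ⊆ (F ∪ {γ}) ∪ {f.b} := fun x hx => Or.inl (Or.inl hx.1)
        have hab : f.a ≠ f.b := ne_of_lt (f.lt hE hF.1)
        have hs : ((F ∪ {γ}) ∪ {f.b}) \ (F \ {f.a}) = ↑({f.a, γ, f.b} : Finset E) := by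
          ext x
          simp only [Set.mem_diff, Set.mem_union, Set.mem_singleton_iff, Finset.coe_insert,
            Set.mem_insert_iff, Finset.coe_singleton, not_and, not_not]
          constructor
          · rintro ⟨(h | h) | h, h2⟩
            · exact Or.inl (h2 h)
            · exact Or.inr (Or.inl h)
            · exact Or.inr (Or.inr h)
          · rintro (rfl | rfl | rfl)
            · exact ⟨Or.inl (Or.inl f.haF), fun _ => rfl⟩
            · exact ⟨Or.inl (Or.inr rfl), fun hh => absurd hh hγ⟩
            · exact ⟨Or.inr rfl, fun hh => absurd hh f.hbF⟩
        funext r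
        rw [chiFn_of_diff eps hXY _ hs r, Finset.card_filter,
          Finset.sum_insert (by simp only [Finset.mem_insert, Finset.mem_singleton]; rintro (hh | hh); exacts [hγa hh.symm, hab hh]),
          Finset.sum_insert (by simp [hγb]), Finset.sum_singleton]
        by_cases hr : r = p
        · rw [if_pos hr, if_neg hpq, if_pos (f.hεa.trans hr.symm : eps f.a = r),
            if_neg (fun hh : eps γ = r => hqp (hh.trans hr)),
            if_pos (f.hεb.trans hr.symm : eps f.b = r), hval]
          norm_num
        · rw [if_neg hr]
          have har : ¬ (eps f.a = r) := fun hh => hr (hh.symm.trans f.hεa)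
          have hbr : ¬ (eps f.b = r) := fun hh => hr (hh.symm.trans f.hεb)
          by_cases hrq : r = eps γ
          · rw [if_pos hrq, if_pos hrq.symm, if_neg har, if_neg hbr]
            norm_num
          · rw [if_neg hrq, if_neg (fun hh : eps γ = r => hrq hh.symm), if_neg har, if_neg hbr]
            norm_num

lemma diff_fib_finite (hE : IsFullHeap A eps) {F G : Set E} (hF : IsProperIdeal eps F)
    (hG : IsProperIdeal eps G) (r : P) : ((G \ F) ∩ eps ⁻¹' {r}).Finite := by
  obtain ⟨fG⟩ := exists_frame hE hG r
  obtain ⟨fF⟩ := exists_frame hE hF r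
  apply (Set.finite_Icc fF.b fG.a).subset
  rintro x ⟨⟨hxG, hxF⟩, hxr⟩
  rw [Set.mem_preimage, Set.mem_singleton_iff] at hxr
  exact ⟨fF.hmin x hxF hxr, fG.hmax x hxG hxr⟩

lemma Sact_symmdiff_finite (eps : E → P) (p : P) (F : Set E) :
    ((Sact eps p F \ F) ∪ (F \ Sact eps p F)).Finite := by
  rw [Sact]
  split_ifs with h1 h2
  · apply (Set.finite_singleton h1.choose).subset
    rintro x (hx | hx)
    · exact absurd (hx.1.1) hx.2
    · by_contra hxa
      exact (hx.2 ⟨hx.1, hxa⟩)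
  · apply (Set.finite_singleton h2.choose).subset
    rintro x (hx | hx)
    · rcases hx.1 with h | h
      · exact absurd h hx.2
      · exact h
    · exact absurd (Or.inl hx.1) hx.2
  · simp

lemma sact_diff_fin (hE : IsFullHeap A eps) (p : P) {X Y : Set E}
    (hX : IsProperIdeal eps X) (hY : IsProperIdeal eps Y) (r : P) :
    ((Sact eps p Y \ Sact eps p X) ∩ eps ⁻¹' {r}).Finite := by
  have hYfin := Sact_symmdiff_finite eps p Y
  have hXfin := Sact_symmdiff_finite eps p X
  have hfin := diff_fib_finite hE hX hY r
  apply ((hYfin.union hXfin).union hfin).subset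
  rintro x ⟨⟨hxY, hxX⟩, hxr⟩
  by_cases hY2 : x ∈ Y
  · by_cases hX2 : x ∈ X
    · exact Or.inl (Or.inr (Or.inr ⟨hX2, hxX⟩))
    · exact Or.inr ⟨⟨hY2, hX2⟩, hxr⟩
  · exact Or.inl (Or.inl (Or.inl ⟨hxY, hY2⟩))

lemma union_proper (hE : IsFullHeap A eps) {F G : Set E} (hF : IsProperIdeal eps F)
    (hG : IsProperIdeal eps G) : IsProperIdeal eps (F ∪ G) := by
  constructor
  · rintro x (hx | hx) y hy
    · exact Or.inl (hF.1 hx hy)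
    · exact Or.inr (hG.1 hx hy)
  · intro r
    obtain ⟨a, hap, haF⟩ := (hF.2 r).1
    refine ⟨⟨a, hap, Or.inl haF⟩, ?_⟩
    obtain ⟨b, hbp, hbF⟩ := (hF.2 r).2
    obtain ⟨b', hb'p, hb'G⟩ := (hG.2 r).2
    rcases hE.comparable b b' (Or.inl (hbp.trans hb'p.symm)) with h | h
    · refine ⟨b', hb'p, ?_⟩
      rintro (hh | hh)
      · exact hbF (hF.1 hh h)
      · exact hb'G hh
    · refine ⟨b, hbp, ?_⟩
      rintro (hh | hh)
      · exact hbF hh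
      · exact hb'G (hG.1 hh h)

lemma diff_finite [Fintype P] (hE : IsFullHeap A eps) {F G : Set E}
    (hF : IsProperIdeal eps F) (hG : IsProperIdeal eps G) : (G \ F).Finite := by
  have heq : G \ F = ⋃ r : P, ((G \ F) ∩ eps ⁻¹' {r}) := by
    ext x
    simp only [Set.mem_iUnion, Set.mem_inter_iff, Set.mem_preimage, Set.mem_singleton_iff]
    exact ⟨fun h => ⟨eps x, h, rfl⟩, fun ⟨r, h, _⟩ => h⟩
  rw [heq]
  exact Set.finite_iUnion (fun r => diff_fib_finite hE hF hG r)

lemma key_mono [Fintype P] [DecidableEq P] (hA : IsGCM A) (hE : IsFullHeap A eps) (p : P) :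
    ∀ (n : ℕ) (F G : Set E), IsProperIdeal eps F → IsProperIdeal eps G → F ⊆ G →
      (G \ F).ncard = n →
      chiFn eps (Sact eps p F) (Sact eps p G) = reflAct A p (chiFn eps F G) := by
  intro n
  induction n with
  | zero =>
    intro F G hF hG hsub hcard
    have hfin := diff_finite hE hF hG
    have hempty : G \ F = ∅ := (Set.ncard_eq_zero hfin).mp hcard
    have hFG : F = G := Set.Subset.antisymm hsub (Set.diff_eq_empty.mp hempty)
    subst hFG
    rw [chiFn_self, chiFn_self, reflAct_zero]
  | succ n ih =>
    intro F G hF hG hsub hcard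
    have hfin := diff_finite hE hF hG
    obtain ⟨γ, hγmem, hγmin⟩ : ∃ γ ∈ hfin.toFinset, ∀ x ∈ hfin.toFinset, ¬ x < γ := by
      obtain ⟨m, hm⟩ := Finset.exists_minimal (s := hfin.toFinset)
        (by rw [Set.Finite.toFinset_nonempty]; exact Set.nonempty_of_ncard_ne_zero (by omega))
      exact ⟨m, hm.1, fun x hx hlt => hlt.not_ge (hm.2 hx hlt.le)⟩
    rw [Set.Finite.mem_toFinset] at hγmem
    have hγG : γ ∈ G := hγmem.1
    have hγF : γ ∉ F := hγmem.2
    have hmin' : ∀ x, x ∈ G → x ∉ F → ¬ x < γ := by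
      intro x hxG hxF
      exact hγmin x (by rw [Set.Finite.mem_toFinset]; exact ⟨hxG, hxF⟩)
    have hF1ideal : IsIdeal (F ∪ {γ}) := by
      rintro x hx y hy
      rcases hx with hx | hx
      · exact Or.inl (hF.1 hx hy)
      · rw [Set.mem_singleton_iff] at hx
        subst hx
        rcases eq_or_lt_of_le hy with heq | hlt
        · exact Or.inr (Set.mem_singleton_iff.mpr heq)
        · left
          have hyG : y ∈ G := hG.1 hγG (le_of_lt hlt)
          by_contra hyF
          exact (hmin' y hyG hyF) hlt
    have hF1 : IsProperIdeal eps (F ∪ {γ}) := by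
      refine ⟨hF1ideal, fun r => ⟨?_, ?_⟩⟩
      · obtain ⟨a, hap, haF⟩ := (hF.2 r).1
        exact ⟨a, hap, Or.inl haF⟩
      · obtain ⟨b, hbp, hbG⟩ := (hG.2 r).2
        refine ⟨b, hbp, ?_⟩
        rintro (hh | hh)
        · exact hbG (hsub hh)
        · exact hbG ((Set.mem_singleton_iff.mp hh) ▸ hγG)
    have hsub1 : F ∪ {γ} ⊆ G := by
      rintro x (hx | hx)
      · exact hsub hx
      · exact (Set.mem_singleton_iff.mp hx) ▸ hγG
    have hdiffeq : G \ (F ∪ {γ}) = (G \ F) \ {γ} := by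
      ext x
      simp only [Set.mem_diff, Set.mem_union, Set.mem_singleton_iff]
      tauto
    have hcard1 : (G \ (F ∪ {γ})).ncard = n := by
      have hstep := Set.ncard_diff_singleton_add_one (show γ ∈ G \ F from ⟨hγG, hγF⟩) hfin
      rw [hdiffeq]
      omega
    have step1 := key_step hA hE p hF hγF hF1
    have step2 := ih (F ∪ {γ}) G hF1 hG hsub1 hcard1
    have hc1 : chiFn eps (Sact eps p F) (Sact eps p G)
        = chiFn eps (Sact eps p F) (Sact eps p (F ∪ {γ}))
          + chiFn eps (Sact eps p (F ∪ {γ})) (Sact eps p G) :=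
      chiFn_add eps _ _ _ (fun r => sact_diff_fin hE p hF hF1 r)
        (fun r => sact_diff_fin hE p hF1 hF r) (fun r => sact_diff_fin hE p hF1 hG r)
        (fun r => sact_diff_fin hE p hG hF1 r)
    have hc2 : chiFn eps F G = chiFn eps F (F ∪ {γ}) + chiFn eps (F ∪ {γ}) G :=
      chiFn_add eps _ _ _ (fun r => diff_fib_finite hE hF hF1 r)
        (fun r => diff_fib_finite hE hF1 hF r) (fun r => diff_fib_finite hE hF1 hG r)
        (fun r => diff_fib_finite hE hG hF1 r)
    rw [hc1, step1, step2, ← reflAct_add, ← hc2]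

lemma key_all [Fintype P] [DecidableEq P] (hA : IsGCM A) (hE : IsFullHeap A eps) (p : P)
    (F F' : Set E) (hF : IsProperIdeal eps F) (hF' : IsProperIdeal eps F') :
    chiFn eps (Sact eps p F) (Sact eps p F') = reflAct A p (chiFn eps F F') := by
  have hG : IsProperIdeal eps (F ∪ F') := union_proper hE hF hF'
  have h1 := key_mono hA hE p (((F ∪ F') \ F).ncard) F (F ∪ F') hF hG
    Set.subset_union_left rfl
  have h2 := key_mono hA hE p (((F ∪ F') \ F').ncard) F' (F ∪ F') hF' hG
    Set.subset_union_right rfl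
  have hc1 : chiFn eps (Sact eps p F) (Sact eps p F')
      = chiFn eps (Sact eps p F) (Sact eps p (F ∪ F'))
        + chiFn eps (Sact eps p (F ∪ F')) (Sact eps p F') :=
    chiFn_add eps _ _ _ (fun r => sact_diff_fin hE p hF hG r)
      (fun r => sact_diff_fin hE p hG hF r) (fun r => sact_diff_fin hE p hG hF' r)
      (fun r => sact_diff_fin hE p hF' hG r)
  have hc2 : chiFn eps F F' = chiFn eps F (F ∪ F') + chiFn eps (F ∪ F') F' :=
    chiFn_add eps _ _ _ (fun r => diff_fib_finite hE hF hG r)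
      (fun r => diff_fib_finite hE hG hF r) (fun r => diff_fib_finite hE hG hF' r)
      (fun r => diff_fib_finite hE hF' hG r)
  rw [hc1, h1, chiFn_neg eps (Sact eps p (F ∪ F')) (Sact eps p F'), h2, ← reflAct_neg,
    ← chiFn_neg eps (F ∪ F') F', ← reflAct_add, ← hc2]

end Heap

/-- For an affine `A`, the character intertwines the action
of `W` on pairs of proper ideals with the reflection representation:
`chi(w·F, w·F') = w(chi(F,F'))`. -/
theorem stmt5 {P E : Type*} [Fintype P] [DecidableEq P] [PartialOrder E]
    [LocallyFiniteOrder E] {A : P → P → ℤ} {eps : E → P}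
    (hA : IsGCM A) (haff : IsAffine A) (hE : IsFullHeap A eps)
    (act : WeylGroup A →* Equiv.Perm {I : Set E // IsProperIdeal eps I})
    (hact : ∀ (p : P) (I : {I : Set E // IsProperIdeal eps I}),
      (act (PresentedGroup.of p) I).val = Sact eps p I.val)
    (ρ : WeylGroup A →* Equiv.Perm (P → ℤ))
    (hρ : ∀ (p : P) (v : P → ℤ), ρ (PresentedGroup.of p) v = reflAct A p v) :
    ∀ (w : WeylGroup A) (F F' : {I : Set E // IsProperIdeal eps I}),
      chiFn eps (act w F).val (act w F').val = ρ w (chiFn eps F.val F'.val) := by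
  have hsq : ∀ p : P,
      (PresentedGroup.of p : WeylGroup A) * PresentedGroup.of p = 1 := by
    intro p
    have hmem : (FreeGroup.of p) ^ 2 ∈ weylRels A := Or.inl ⟨p, rfl⟩
    have h1 : PresentedGroup.mk (weylRels A) ((FreeGroup.of p) ^ 2) = 1 :=
      (QuotientGroup.eq_one_iff _).mpr (Subgroup.subset_normalClosure hmem)
    rw [map_pow] at h1
    rw [← sq]
    exact h1
  have hgen : ∀ (p : P) (F F' : {I : Set E // IsProperIdeal eps I}),
      chiFn eps (act (PresentedGroup.of p) F).val (act (PresentedGroup.of p) F').val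
        = ρ (PresentedGroup.of p) (chiFn eps F.val F'.val) := by
    intro p F F'
    rw [hact, hact, hρ]
    exact key_all hA hE p F.val F'.val F.2 F'.2
  intro w
  induction w using PresentedGroup.induction_on with
  | _ z =>
    induction z using FreeGroup.induction_on with
    | C1 =>
      intro F F'
      simp only [map_one, Equiv.Perm.coe_one, id_eq]
    | of x =>
      exact hgen x
    | inv_of x ih =>
      have hxx : PresentedGroup.mk (weylRels A) (FreeGroup.of x : FreeGroup P)⁻¹
          = PresentedGroup.mk (weylRels A) (FreeGroup.of x : FreeGroup P) := by
        rw [map_inv]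
        exact inv_eq_of_mul_eq_one_right (hsq x)
      rw [hxx]
      exact ih
    | mul x y ihx ihy =>
      intro F F'
      rw [map_mul, map_mul, map_mul, Equiv.Perm.mul_apply, Equiv.Perm.mul_apply,
        Equiv.Perm.mul_apply]
      rw [ihx (act (PresentedGroup.mk (weylRels A) y) F)
        (act (PresentedGroup.mk (weylRels A) y) F'), ihy F F']
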